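/- Let n, s ≥ 1 be integers and let m = n / gcd(n, s). The wreath product C_m ≀ C_n, realized as the semidirect product W = (ZMod n → ZMod m) ⋊ ZMod n with ZMod n acting by shifting the argument, is isomorphic to the group presented by two generators a, b subject to the relations aⁿ = e, b^{a^j} · b^{a^{i+s}} = b^{a^i} · b^{a^{j+s}} for all i, j ∈ {0, …, n−1}, and b^{a^i} · b^{a^{i+s}} · b^{a^{i+2s}} ⋯ b^{a^{i+(m−1)s}} = e for all i ∈ {0, …, n−1}. -/

import Mathlib

/-- Shift of functions `ZMod n → ZMod m` by `r : ZMod n`, as an additive automorphism. -/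
def shiftEquiv (n m : ℕ) (r : ZMod n) : (ZMod n → ZMod m) ≃+ (ZMod n → ZMod m) where
  toFun f := fun x => f (x + r)
  invFun f := fun x => f (x - r)
  left_inv f := funext fun x => by simp
  right_inv f := funext fun x => by simp
  map_add' f g := rfl

/-- The shift action of `ZMod n` on `ZMod n → ZMod m`, written multiplicatively. -/
def shiftHom (n m : ℕ) :
    Multiplicative (ZMod n) →* MulAut (Multiplicative (ZMod n → ZMod m)) where
  toFun r := AddEquiv.toMultiplicative (shiftEquiv n m r.toAdd)
  map_one' := by
    apply MulEquiv.ext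
    intro f
    show Multiplicative.ofAdd (fun x => f.toAdd (x + 0)) = f
    simp
  map_mul' r r' := by
    apply MulEquiv.ext
    intro f
    funext x
    show f.toAdd (x + (r.toAdd + r'.toAdd)) = f.toAdd (x + r.toAdd + r'.toAdd)
    rw [add_assoc]

/-- The regular wreath product `C_m ≀ C_n`, realized as the semidirect product
`(ZMod n → ZMod m) ⋊ ZMod n` with `ZMod n` acting by shifting the argument. -/
abbrev Wreath (n m : ℕ) : Type :=
  SemidirectProduct (Multiplicative (ZMod n → ZMod m)) (Multiplicative (ZMod n))
    (shiftHom n m)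

/-- The generator `a` of the presentation. -/
def A : FreeGroup (Fin 2) := FreeGroup.of 0

/-- The generator `b` of the presentation. -/
def B : FreeGroup (Fin 2) := FreeGroup.of 1

/-- Conjugation `x^y = y⁻¹ x y` in the free group. -/
def cj (x y : FreeGroup (Fin 2)) : FreeGroup (Fin 2) := y⁻¹ * x * y

/-- Relators: `aⁿ`, the commutation relations
`b^{a^j} · b^{a^{i+s}} = b^{a^i} · b^{a^{j+s}}` for `i, j ∈ {0, …, n−1}`, and the
product relations `b^{a^i} · b^{a^{i+s}} ⋯ b^{a^{i+(m−1)s}} = e` for `i ∈ {0, …, n−1}`. -/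
def rels (n s m : ℕ) : Set (FreeGroup (Fin 2)) :=
  {A ^ n} ∪
  {x | ∃ i < n, ∃ j < n,
      x = cj B (A ^ j) * cj B (A ^ (i + s)) * (cj B (A ^ i) * cj B (A ^ (j + s)))⁻¹} ∪
  {x | ∃ i < n, x = ((List.range m).map fun k => cj B (A ^ (i + k * s))).prod}

namespace S16
open Multiplicative SemidirectProduct

/-- Power map from `ZMod k` given an element of order dividing `k`. -/
def powZMod {G : Type*} [Group G] {k : ℕ} [NeZero k] (g : G) (h : g ^ k = 1) :
    Multiplicative (ZMod k) →* G where
  toFun x := g ^ x.toAdd.val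
  map_one' := by
    show g ^ (0 : ZMod k).val = 1
    simp [ZMod.val_zero]
  map_mul' x y := by
    show g ^ (x.toAdd + y.toAdd).val = g ^ x.toAdd.val * g ^ y.toAdd.val
    rw [ZMod.val_add, ← pow_eq_pow_mod _ h, pow_add]

lemma powZMod_apply {G : Type*} [Group G] {k : ℕ} [NeZero k] (g : G) (h : g ^ k = 1)
    (x : Multiplicative (ZMod k)) : powZMod g h x = g ^ x.toAdd.val := rfl

lemma powZMod_natCast {G : Type*} [Group G] {k : ℕ} [NeZero k] (g : G) (h : g ^ k = 1)
    (j : ℕ) : powZMod g h (ofAdd ((j : ZMod k))) = g ^ j := by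
  show g ^ ((j : ZMod k)).val = g ^ j
  rw [ZMod.val_natCast, ← pow_eq_pow_mod _ h]

/-- Hom extensionality on `Multiplicative` of a finite pi type of additive groups. -/
theorem multPi_hom_ext {ι : Type*} [Fintype ι] [DecidableEq ι] {Z : ι → Type*}
    [∀ i, AddCommGroup (Z i)] {H : Type*} [Group H]
    {F G : Multiplicative ((i : ι) → Z i) →* H}
    (h : ∀ (i : ι) (v : Z i),
      F (ofAdd (Pi.single i v)) = G (ofAdd (Pi.single i v))) : F = G := by
  ext x
  have hx : x = ∏ i, ofAdd (Pi.single i (toAdd x i)) := by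
    rw [← ofAdd_sum, Finset.univ_sum_single]
    rfl
  rw [hx]
  exact Subgroup.prod_mem (F.eqLocus G) fun i _ => h i (toAdd x i)

section W
variable (n s m : ℕ)

lemma mk_mul (f g : ZMod n → ZMod m) (u v : ZMod n) :
    (⟨ofAdd f, ofAdd u⟩ : Wreath n m) * ⟨ofAdd g, ofAdd v⟩
      = ⟨ofAdd (f + fun x => g (x + u)), ofAdd (u + v)⟩ := rfl

lemma inr_eq (u : ZMod n) :
    (inr (ofAdd u) : Wreath n m) = ⟨ofAdd 0, ofAdd u⟩ := rfl

lemma inl_eq (f : ZMod n → ZMod m) :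
    (inl (ofAdd f) : Wreath n m) = ⟨ofAdd f, ofAdd 0⟩ := rfl

lemma single_shift (a u : ZMod n) (v : ZMod m) :
    (fun x => (Pi.single a v : ZMod n → ZMod m) (x + u)) = Pi.single (a - u) v := by
  funext x
  simp only [Pi.single_apply, eq_sub_iff_add_eq]

def wa : Wreath n m := inr (ofAdd (1 : ZMod n))

def wB (r : ZMod n) : Wreath n m := ⟨ofAdd (Pi.single r 1), ofAdd ((s : ZMod n))⟩

def wb : Wreath n m := wB n s m 0

lemma wa_pow (k : ℕ) : wa n m ^ k = inr (ofAdd ((k : ZMod n))) := by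
  rw [wa, ← map_pow]
  congr 1
  rw [← ofAdd_nsmul, nsmul_eq_mul, mul_one]

lemma wa_pow_n : wa n m ^ n = 1 := by
  rw [wa_pow, ZMod.natCast_self]
  simp

lemma wB_conj (r u : ZMod n) :
    (inr (ofAdd u))⁻¹ * wB n s m r * inr (ofAdd u) = wB n s m (r + u) := by
  rw [← map_inv, ← ofAdd_neg, inr_eq n m (-u), inr_eq n m u, wB, mk_mul, mk_mul, wB]
  congr 1
  · rw [single_shift]
    congr 1
    funext x
    simp [sub_neg_eq_add]
  · congr 1
    ring

lemma wa_conj (j : ℕ) :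
    (wa n m ^ j)⁻¹ * wb n s m * wa n m ^ j = wB n s m ((j : ZMod n)) := by
  rw [wa_pow, wb, wB_conj, zero_add]

lemma wB_mul (r t : ZMod n) :
    wB n s m r * wB n s m t
      = ⟨ofAdd (Pi.single r 1 + Pi.single (t - (s : ZMod n)) 1),
          ofAdd ((s : ZMod n) + (s : ZMod n))⟩ := by
  rw [wB, wB, mk_mul, single_shift]

lemma wB_prod (r : ZMod n) (K : ℕ) :
    ((List.range K).map fun k : ℕ => wB n s m (r + (k : ZMod n) * (s : ZMod n))).prod
      = ⟨ofAdd (K • Pi.single r (1 : ZMod m)), ofAdd (((K * s : ℕ) : ZMod n))⟩ := by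
  induction K with
  | zero =>
      simp only [List.range_zero, List.map_nil, List.prod_nil, zero_smul, Nat.zero_mul,
        Nat.cast_zero]
      rfl
  | succ K ih =>
      rw [List.range_succ, List.map_append, List.prod_append, ih, List.map_singleton,
        List.prod_singleton, wB, mk_mul]
      congr 1
      · rw [single_shift, succ_nsmul]
        have h : r + (K : ZMod n) * (s : ZMod n) - ((K * s : ℕ) : ZMod n) = r := by
          push_cast
          ring
        rw [h]
      · congr 1
        push_cast
        ring

lemma single_w (j : ℕ) :
    wB n s m ((j : ZMod n)) * (wa n m ^ s)⁻¹
      = inl (ofAdd (Pi.single ((j : ZMod n)) (1 : ZMod m))) := by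
  rw [wa_pow, ← map_inv, ← ofAdd_neg, inr_eq n m (-(s : ZMod n)), wB, mk_mul, inl_eq]
  congr 1
  · congr 1
    funext x
    simp
  · congr 1
    ring

lemma wB_rel (a b : ZMod n) :
    wB n s m a * wB n s m (b + (s : ZMod n)) = wB n s m b * wB n s m (a + (s : ZMod n)) := by
  rw [wB_mul, wB_mul, add_sub_cancel_right, add_sub_cancel_right, add_comm (Pi.single a 1)]

/-- The pair of generators in the wreath product. -/
def fgen : Fin 2 → Wreath n m := ![wa n m, wb n s m]

lemma lift_A_pow (k : ℕ) : FreeGroup.lift (fgen n s m) (A ^ k) = wa n m ^ k := by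
  rw [map_pow]
  simp [A, fgen]

lemma lift_cj (k : ℕ) :
    FreeGroup.lift (fgen n s m) (cj B (A ^ k)) = wB n s m ((k : ZMod n)) := by
  rw [cj, map_mul, map_mul, map_inv, lift_A_pow, ← wa_conj n s m k]
  congr 1
  simp [B, fgen, wb]

lemma hw (hms : n ∣ m * s) :
    ∀ r ∈ rels n s m, FreeGroup.lift (fgen n s m) r = 1 := by
  intro r hr
  simp only [rels, Set.mem_union, Set.mem_singleton_iff, Set.mem_setOf_eq] at hr
  rcases hr with (rfl | ⟨i, _, j, _, rfl⟩) | ⟨i, _, rfl⟩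
  · rw [lift_A_pow, wa_pow_n]
  · rw [map_mul, map_mul, map_inv, map_mul, mul_inv_eq_one]
    rw [lift_cj, lift_cj, lift_cj, lift_cj]
    push_cast
    exact wB_rel n s m ((j : ZMod n)) ((i : ZMod n))
  · rw [map_list_prod, List.map_map]
    have he : (List.range m).map (⇑(FreeGroup.lift (fgen n s m)) ∘ fun k => cj B (A ^ (i + k * s)))
        = (List.range m).map (fun k : ℕ => wB n s m (((i : ZMod n)) + (k : ZMod n) * (s : ZMod n))) := by
      apply List.map_congr_left
      intro a _
      show FreeGroup.lift (fgen n s m) (cj B (A ^ (i + a * s))) = _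
      rw [lift_cj]
      push_cast
      ring_nf
    rw [he, wB_prod]
    have h1 : m • (Pi.single ((i : ZMod n)) 1 : ZMod n → ZMod m) = 0 := by
      funext x
      rcases eq_or_ne x ((i : ZMod n)) with h | h
      · simp [h, Pi.single_apply, nsmul_eq_mul, ZMod.natCast_self]
      · simp [h, Pi.single_apply]
    have h2 : ((m * s : ℕ) : ZMod n) = 0 := (ZMod.natCast_eq_zero_iff _ n).mpr hms
    rw [h1, h2]
    rfl

end W

section P

variable (n s m : ℕ)

/-- The presented group. -/
abbrev P := PresentedGroup (rels n s m)

def pa : P n s m := PresentedGroup.of 0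

def pb : P n s m := PresentedGroup.of 1

def pB (i : ℕ) : P n s m := (pa n s m ^ i)⁻¹ * pb n s m * pa n s m ^ i

def c (i : ℕ) : P n s m := pB n s m i * (pa n s m ^ s)⁻¹

def cz (r : ZMod n) : P n s m := c n s m r.val

lemma rels_one : ∀ r ∈ rels n s m, PresentedGroup.mk (rels n s m) r = 1 := fun r hr =>
  (QuotientGroup.eq_one_iff r).mpr (Subgroup.subset_normalClosure hr)

lemma mk_A_pow (k : ℕ) : PresentedGroup.mk (rels n s m) (A ^ k) = pa n s m ^ k := by
  rw [map_pow]; rfl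

lemma mk_cj (k : ℕ) : PresentedGroup.mk (rels n s m) (cj B (A ^ k)) = pB n s m k := by
  rw [cj, map_mul, map_mul, map_inv, mk_A_pow]
  rfl

lemma pa_pow_n : pa n s m ^ n = 1 := by
  rw [← mk_A_pow]
  exact rels_one n s m _ (Or.inl (Or.inl rfl))

lemma pB_mod (i : ℕ) : pB n s m i = pB n s m (i % n) := by
  rw [pB, pB, pow_eq_pow_mod i (pa_pow_n n s m)]

lemma pB_congr {i j : ℕ} (h : i % n = j % n) : pB n s m i = pB n s m j := by
  rw [pB_mod n s m i, h, ← pB_mod]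

lemma rel1 [NeZero n] (i j : ℕ) :
    pB n s m j * pB n s m (i + s) = pB n s m i * pB n s m (j + s) := by
  have h := rels_one n s m _ (Or.inl (Or.inr
    ⟨i % n, Nat.mod_lt _ (NeZero.pos n), j % n, Nat.mod_lt _ (NeZero.pos n), rfl⟩))
  rw [map_mul, map_mul, map_inv, map_mul, mul_inv_eq_one, mk_cj, mk_cj, mk_cj, mk_cj] at h
  have e1 : pB n s m (j % n) = pB n s m j := pB_congr n s m (Nat.mod_mod_of_dvd j dvd_rfl)
  have e2 : pB n s m (i % n + s) = pB n s m (i + s) := pB_congr n s m (by simp [Nat.add_mod])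
  have e3 : pB n s m (i % n) = pB n s m i := pB_congr n s m (Nat.mod_mod_of_dvd i dvd_rfl)
  have e4 : pB n s m (j % n + s) = pB n s m (j + s) := pB_congr n s m (by simp [Nat.add_mod])
  rw [e1, e2, e3, e4] at h
  exact h

lemma rel2 [NeZero n] (i : ℕ) :
    ((List.range m).map fun k : ℕ => pB n s m (i + k * s)).prod = 1 := by
  have h := rels_one n s m _ (Or.inr ⟨i % n, Nat.mod_lt _ (NeZero.pos n), rfl⟩)
  rw [map_list_prod, List.map_map] at h
  rw [← h]
  apply congrArg
  apply List.map_congr_left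
  intro a _
  show pB n s m (i + a * s) = PresentedGroup.mk (rels n s m) (cj B (A ^ (i % n + a * s)))
  rw [mk_cj]
  exact pB_congr n s m (by simp [Nat.add_mod])

lemma pa_conj (u i : ℕ) :
    (pa n s m ^ u)⁻¹ * pB n s m i * pa n s m ^ u = pB n s m (i + u) := by
  simp [pB, pow_add, mul_assoc]

lemma rel1' [NeZero n] (i j : ℕ) :
    pB n s m i * pB n s m (j + s) = pB n s m j * pB n s m (i + s) :=
  (rel1 n s m i j).symm

lemma c_commute [NeZero n] (i j : ℕ) : Commute (c n s m i) (c n s m j) := by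
  have key : ∀ a b : ℕ, c n s m a * c n s m b
      = pB n s m a * pB n s m (b + s) * ((pa n s m ^ s)⁻¹ * (pa n s m ^ s)⁻¹) := by
    intro a b
    rw [c, c, ← pa_conj n s m s b]
    group
  show c n s m i * c n s m j = c n s m j * c n s m i
  rw [key, key, rel1' n s m i j]

lemma c_pow (i k : ℕ) :
    c n s m i ^ k
      = ((List.range k).map fun t : ℕ => pB n s m (i + t * s)).prod
          * ((pa n s m ^ s)⁻¹) ^ k := by
  induction k with
  | zero => simp
  | succ k ih =>
      rw [pow_succ, ih, List.range_succ, List.map_append, List.prod_append,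
        List.map_singleton, List.prod_singleton]
      have h1 : ((pa n s m ^ s)⁻¹) ^ k = (pa n s m ^ (k * s))⁻¹ := by
        rw [inv_pow, ← pow_mul, mul_comm s k]
      rw [pow_succ, h1, c]
      have h2 : (pa n s m ^ (k * s))⁻¹ * pB n s m i
          = pB n s m (i + k * s) * (pa n s m ^ (k * s))⁻¹ := by
        rw [← pa_conj n s m (k * s) i]
        group
      rw [mul_assoc ((List.range k).map fun t : ℕ => pB n s m (i + t * s)).prod,
        ← mul_assoc (pa n s m ^ (k * s))⁻¹ (pB n s m i) (pa n s m ^ s)⁻¹, h2]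
      simp [mul_assoc]

lemma c_pow_m [NeZero n] (hms : n ∣ m * s) (i : ℕ) : c n s m i ^ m = 1 := by
  rw [c_pow, rel2, one_mul, inv_pow, ← pow_mul, inv_eq_one]
  obtain ⟨t, ht⟩ := hms
  rw [mul_comm s m, ht, pow_mul, pa_pow_n, one_pow]

lemma c_mod (i : ℕ) : c n s m i = c n s m (i % n) := by
  rw [c, c, pB_mod]

lemma cz_natCast [NeZero n] (j : ℕ) : cz n s m ((j : ZMod n)) = c n s m j := by
  rw [cz, ZMod.val_natCast]
  exact (c_mod n s m j).symm

lemma cz_pow_m [NeZero n] (hms : n ∣ m * s) (r : ZMod n) : cz n s m r ^ m = 1 :=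
  c_pow_m n s m hms r.val

lemma c_conj (u i : ℕ) :
    (pa n s m ^ u)⁻¹ * c n s m i * pa n s m ^ u = c n s m (i + u) := by
  rw [c, c, ← pa_conj n s m u i]
  group

lemma cz_conj [NeZero n] (r u : ZMod n) :
    (pa n s m ^ u.val)⁻¹ * cz n s m r * pa n s m ^ u.val = cz n s m (r + u) := by
  rw [cz, c_conj, ← cz_natCast]
  congr 1
  push_cast
  simp [ZMod.natCast_val, ZMod.cast_id]

section Homs

variable [NeZero n] [NeZero m]

/-- The image of `ZMod n` in the presented group. -/
def al : Multiplicative (ZMod n) →* P n s m := powZMod (pa n s m) (pa_pow_n n s m)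

lemma al_apply (g : Multiplicative (ZMod n)) :
    al n s m g = pa n s m ^ (toAdd g).val := rfl

/-- Coordinate homs. -/
def bi (hms : n ∣ m * s) (r : ZMod n) : Multiplicative (ZMod m) →* P n s m :=
  powZMod (cz n s m r) (cz_pow_m n s m hms r)

lemma bi_comm (hms : n ∣ m * s) :
    Pairwise fun r t : ZMod n => ∀ x y, Commute (bi n s m hms r x) (bi n s m hms t y) :=
  fun r t _ => fun x y => (c_commute n s m r.val t.val).pow_pow _ _

/-- `Multiplicative` of a pi type vs pi of `Multiplicative`s. -/
def eMz : Multiplicative (ZMod n → ZMod m) ≃* ((i : ZMod n) → Multiplicative (ZMod m)) where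
  toFun f i := ofAdd (toAdd f i)
  invFun g := ofAdd fun i => toAdd (g i)
  left_inv _ := rfl
  right_inv _ := rfl
  map_mul' _ _ := rfl

lemma eMz_single (i : ZMod n) (v : ZMod m) :
    eMz n m (ofAdd (Pi.single i v)) = Pi.mulSingle i (ofAdd v) := by
  funext j
  show ofAdd ((Pi.single i v : ZMod n → ZMod m) j)
      = (Pi.mulSingle i (ofAdd v) : (j : ZMod n) → Multiplicative (ZMod m)) j
  rcases eq_or_ne j i with h | h
  · subst h
    simp
  · simp [Pi.single_apply, Pi.mulSingle_apply, h]

/-- The base hom. -/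
def bh (hms : n ∣ m * s) : Multiplicative (ZMod n → ZMod m) →* P n s m :=
  (MonoidHom.noncommPiCoprod (bi n s m hms) (bi_comm n s m hms)).comp
    (eMz n m).toMonoidHom

lemma bh_single (hms : n ∣ m * s) (i : ZMod n) (v : ZMod m) :
    bh n s m hms (ofAdd (Pi.single i v)) = cz n s m i ^ v.val := by
  show (MonoidHom.noncommPiCoprod (bi n s m hms) (bi_comm n s m hms))
      (eMz n m (ofAdd (Pi.single i v))) = _
  rw [eMz_single, MonoidHom.noncommPiCoprod_mulSingle]
  rfl

lemma shift_single (g : Multiplicative (ZMod n)) (i : ZMod n) (v : ZMod m) :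
    (shiftHom n m g) (ofAdd (Pi.single i v)) = ofAdd (Pi.single (i - toAdd g) v) := by
  show ofAdd (fun x => (Pi.single i v : ZMod n → ZMod m) (x + toAdd g)) = _
  rw [single_shift]

lemma compat (hms : n ∣ m * s) (g : Multiplicative (ZMod n)) :
    (bh n s m hms).comp ((shiftHom n m) g).toMonoidHom
      = (MulAut.conj (al n s m g)).toMonoidHom.comp (bh n s m hms) := by
  apply multPi_hom_ext
  intro i v
  show bh n s m hms ((shiftHom n m g) (ofAdd (Pi.single i v)))
      = MulAut.conj (al n s m g) (bh n s m hms (ofAdd (Pi.single i v)))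
  rw [shift_single, bh_single, bh_single, map_pow]
  congr 1
  rw [MulAut.conj_apply]
  have h := cz_conj n s m (i - toAdd g) (toAdd g)
  rw [sub_add_cancel] at h
  rw [← h, al_apply]
  group

/-- The hom from the wreath product to the presented group. -/
def sig (hms : n ∣ m * s) : Wreath n m →* P n s m :=
  SemidirectProduct.lift (bh n s m hms) (al n s m) (compat n s m hms)

/-- The hom from the presented group to the wreath product. -/
def tau (hms : n ∣ m * s) : P n s m →* Wreath n m :=
  PresentedGroup.toGroup (hw n s m hms)

lemma tau_pa (hms : n ∣ m * s) : tau n s m hms (pa n s m) = wa n m := by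
  show PresentedGroup.toGroup (hw n s m hms) (PresentedGroup.of 0) = wa n m
  rw [PresentedGroup.toGroup.of]
  rfl

lemma tau_pb (hms : n ∣ m * s) : tau n s m hms (pb n s m) = wb n s m := by
  show PresentedGroup.toGroup (hw n s m hms) (PresentedGroup.of 1) = wb n s m
  rw [PresentedGroup.toGroup.of]
  rfl

lemma tau_pB (hms : n ∣ m * s) (i : ℕ) :
    tau n s m hms (pB n s m i) = wB n s m ((i : ZMod n)) := by
  rw [pB, map_mul, map_mul, map_inv, map_pow, tau_pa, tau_pb, wa_conj]

lemma tau_cz (hms : n ∣ m * s) (i : ZMod n) :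
    tau n s m hms (cz n s m i) = inl (ofAdd (Pi.single i 1)) := by
  rw [cz, c, map_mul, map_inv, map_pow, tau_pa, tau_pB, single_w]
  congr 2
  simp [ZMod.natCast_val, ZMod.cast_id]

lemma sig_wa (hms : n ∣ m * s) : sig n s m hms (wa n m) = pa n s m := by
  rw [wa, sig, SemidirectProduct.lift_inr]
  have h := powZMod_natCast (pa n s m) (pa_pow_n n s m) 1
  rw [Nat.cast_one, pow_one] at h
  exact h

lemma sig_wb (hms : n ∣ m * s) : sig n s m hms (wb n s m) = pb n s m := by
  rw [wb, wB, SemidirectProduct.mk_eq_inl_mul_inr, map_mul, sig,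
    SemidirectProduct.lift_inl, SemidirectProduct.lift_inr]
  show bh n s m hms (ofAdd (Pi.single 0 1)) * al n s m (ofAdd ((s : ZMod n))) = pb n s m
  rw [bh_single]
  have h1 : cz n s m 0 ^ (1 : ZMod m).val = cz n s m 0 := by
    have : (1 : ZMod m) = ((1 : ℕ) : ZMod m) := by simp
    rw [this, ZMod.val_natCast, ← pow_eq_pow_mod _ (cz_pow_m n s m hms 0), pow_one]
  have h2 : al n s m (ofAdd ((s : ZMod n))) = pa n s m ^ s :=
    powZMod_natCast (pa n s m) (pa_pow_n n s m) s
  rw [h1, h2]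
  have h3 : cz n s m 0 = pb n s m * (pa n s m ^ s)⁻¹ := by
    rw [show (0 : ZMod n) = ((0 : ℕ) : ZMod n) by simp, cz_natCast, c]
    simp [pB]
  rw [h3]
  group

lemma left_inv_lemma (hms : n ∣ m * s) (x : P n s m) :
    sig n s m hms (tau n s m hms x) = x := by
  have hcomp : ((sig n s m hms).comp (tau n s m hms)).comp (PresentedGroup.mk (rels n s m))
      = PresentedGroup.mk (rels n s m) := by
    apply FreeGroup.ext_hom
    intro x
    fin_cases x
    · show sig n s m hms (tau n s m hms (pa n s m)) = pa n s m
      rw [tau_pa, sig_wa]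
    · show sig n s m hms (tau n s m hms (pb n s m)) = pb n s m
      rw [tau_pb, sig_wb]
  induction x using PresentedGroup.induction_on with
  | _ z => exact DFunLike.congr_fun hcomp z

lemma single_nsmul (i : ZMod n) (v : ZMod m) :
    v.val • (Pi.single i 1 : ZMod n → ZMod m) = Pi.single i v := by
  funext x
  rcases eq_or_ne x i with h | h
  · simp [h, Pi.single_apply, nsmul_eq_mul, ZMod.natCast_val, ZMod.cast_id]
  · simp [h, Pi.single_apply]

lemma right_inv_lemma (hms : n ∣ m * s) (w : Wreath n m) :
    tau n s m hms (sig n s m hms w) = w := by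
  have h_inr : ∀ g, tau n s m hms (sig n s m hms (inr g)) = inr g := by
    intro g
    rw [sig, SemidirectProduct.lift_inr]
    show tau n s m hms (powZMod (pa n s m) (pa_pow_n n s m) g) = inr g
    rw [powZMod_apply]
    rw [map_pow, tau_pa, wa_pow]
    congr 1
    rw [show (((toAdd g).val : ℕ) : ZMod n) = toAdd g from ZMod.natCast_rightInverse (toAdd g)]
    rfl
  have h_inl : ∀ f, tau n s m hms (sig n s m hms (inl f)) = inl f := by
    have hh : (tau n s m hms).comp ((sig n s m hms).comp inl)
        = (inl : Multiplicative (ZMod n → ZMod m) →* Wreath n m) := by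
      apply multPi_hom_ext
      intro i v
      show tau n s m hms (sig n s m hms (inl (ofAdd (Pi.single i v))))
          = inl (ofAdd (Pi.single i v))
      rw [sig, SemidirectProduct.lift_inl, bh_single, map_pow, tau_cz, ← map_pow]
      congr 1
      rw [← ofAdd_nsmul, single_nsmul]
    intro f
    exact DFunLike.congr_fun hh f
  calc tau n s m hms (sig n s m hms w)
      = tau n s m hms (sig n s m hms (inl w.left * inr w.right)) := by
        rw [inl_left_mul_inr_right]
    _ = inl w.left * inr w.right := by rw [map_mul, map_mul, h_inl, h_inr]
    _ = w := inl_left_mul_inr_right w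

end Homs
end P
end S16

/-- For `n, s ≥ 1` and `m = n / gcd(n, s)`, the wreath product `C_m ≀ C_n` is isomorphic
to the group presented by generators `a, b` with the relations `aⁿ = e`,
`b^{a^j} b^{a^{i+s}} = b^{a^i} b^{a^{j+s}}` (`0 ≤ i, j ≤ n−1`), and
`b^{a^i} b^{a^{i+s}} ⋯ b^{a^{i+(m−1)s}} = e` (`0 ≤ i ≤ n−1`). -/
theorem stmt16 (n s : ℕ) (hn : 1 ≤ n) (hs : 1 ≤ s) (m : ℕ) (hm : m = n / Nat.gcd n s) :
    Nonempty (PresentedGroup (rels n s m) ≃* Wreath n m) := by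
  haveI : NeZero n := ⟨by omega⟩
  have hgpos : 0 < Nat.gcd n s := Nat.gcd_pos_of_pos_left s hn
  have hmpos : 0 < m := by
    rw [hm]
    exact Nat.div_pos (Nat.le_of_dvd (by omega) (Nat.gcd_dvd_left n s)) hgpos
  haveI : NeZero m := ⟨by omega⟩
  have hms : n ∣ m * s := by
    obtain ⟨t, ht⟩ := Nat.gcd_dvd_right n s
    refine ⟨t, ?_⟩
    have hdn := Nat.gcd_dvd_left n s
    set g := Nat.gcd n s with hg
    rw [hm, ht, ← mul_assoc, Nat.div_mul_cancel hdn]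
  exact ⟨{ toFun := S16.tau n s m hms
           invFun := S16.sig n s m hms
           left_inv := S16.left_inv_lemma n s m hms
           right_inv := S16.right_inv_lemma n s m hms
           map_mul' := map_mul _ }⟩
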